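/- Let V be a real vector space, X ⊆ V a convex subset with 0 ∈ X, and ⊕ a binary operation on X making ⟨X, +_p, ⊕⟩ a convex semilattice (with +_p inherited from V). Then there exists a linear subspace W of V with X ⊆ W and a binary operation ⊞ on W such that ⟨W, +_p, ⊞⟩ is a convex semilattice and ⊞ restricted to X × X equals ⊕. -/

import Mathlib

namespace CSLExt

open scoped Classical

variable {V : Type*} [AddCommGroup V] [Module ℝ V]

/-- The cone generated by `X`. -/
def CC (X : Set V) : Set V := {v | ∃ c : ℝ, 0 < c ∧ ∃ x ∈ X, v = c • x}

variable {X : Set V} {o : V → V → V}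

section

variable (hX : ∀ x ∈ X, ∀ y ∈ X, ∀ p ∈ Set.Ioo (0 : ℝ) 1, p • x + (1 - p) • y ∈ X)
variable (h0 : (0 : V) ∈ X)

include hX h0 in
lemma shrink {x : V} (hx : x ∈ X) {p : ℝ} (hp0 : 0 < p) (hp1 : p ≤ 1) : p • x ∈ X := by
  rcases eq_or_lt_of_le hp1 with h | h
  · rw [h, one_smul]; exact hx
  · simpa using hX x hx 0 h0 p ⟨hp0, h⟩

include hX h0 in
lemma grow {u : V} {s t : ℝ} (hs : 0 < s) (hst : s ≤ t) (hu : s⁻¹ • u ∈ X) :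
    t⁻¹ • u ∈ X := by
  have ht : 0 < t := lt_of_lt_of_le hs hst
  have h1 : t⁻¹ • u = (s / t) • (s⁻¹ • u) := by
    rw [smul_smul]; congr 1; field_simp
  rw [h1]
  exact shrink hX h0 hu (by positivity) (div_le_one_of_le₀ hst ht.le)

lemma X_subset_CC : X ⊆ CC X := fun x hx => ⟨1, one_pos, x, hx, (one_smul ℝ x).symm⟩

include h0 in
lemma zero_mem_CC : (0 : V) ∈ CC X := X_subset_CC h0

include hX h0 in
lemma CC_exists_scale {u : V} (hu : u ∈ CC X) : ∃ c : ℝ, 0 < c ∧ ∀ s, c ≤ s → s⁻¹ • u ∈ X := by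
  obtain ⟨c, hc, x, hx, rfl⟩ := hu
  refine ⟨c, hc, fun s hs => grow hX h0 hc hs ?_⟩
  rw [smul_smul, inv_mul_cancel₀ hc.ne', one_smul]; exact hx

include hX in
lemma CC_add {u v : V} (hu : u ∈ CC X) (hv : v ∈ CC X) : u + v ∈ CC X := by
  obtain ⟨c, hc, x, hx, rfl⟩ := hu
  obtain ⟨d, hd, y, hy, rfl⟩ := hv
  have hcd : 0 < c + d := by linarith
  refine ⟨c + d, hcd, (c / (c + d)) • x + (1 - c / (c + d)) • y, ?_, ?_⟩
  · exact hX x hx y hy _ ⟨by positivity, by rw [div_lt_one hcd]; linarith⟩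
  · rw [smul_add, smul_smul, smul_smul]
    congr 1 <;> congr 1 <;> field_simp <;> ring

lemma CC_smul {u : V} {c : ℝ} (hc : 0 < c) (hu : u ∈ CC X) : c • u ∈ CC X := by
  obtain ⟨d, hd, x, hx, rfl⟩ := hu
  exact ⟨c * d, by positivity, x, hx, (smul_smul c d x)⟩

variable (hdist : ∀ x ∈ X, ∀ y ∈ X, ∀ z ∈ X, ∀ p ∈ Set.Ioo (0 : ℝ) 1,
      p • o x y + (1 - p) • z = o (p • x + (1 - p) • z) (p • y + (1 - p) • z))

include h0 hdist in
lemma hom {x y : V} (hx : x ∈ X) (hy : y ∈ X) {p : ℝ} (hp0 : 0 < p) (hp1 : p < 1) :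
    o (p • x) (p • y) = p • o x y := by
  have := hdist x hx y hy 0 h0 p ⟨hp0, hp1⟩
  simpa using this.symm

include h0 hdist in
lemma key {u v : V} {s t : ℝ} (hs : 0 < s) (hst : s ≤ t)
    (hsu : s⁻¹ • u ∈ X) (hsv : s⁻¹ • v ∈ X) :
    t • o (t⁻¹ • u) (t⁻¹ • v) = s • o (s⁻¹ • u) (s⁻¹ • v) := by
  rcases eq_or_lt_of_le hst with h | h
  · rw [h]
  · have ht : 0 < t := lt_of_lt_of_le hs hst
    have hp0 : 0 < s / t := by positivity
    have hp1 : s / t < 1 := (div_lt_one ht).mpr h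
    have e1 : t⁻¹ • u = (s / t) • (s⁻¹ • u) := by rw [smul_smul]; congr 1; field_simp
    have e2 : t⁻¹ • v = (s / t) • (s⁻¹ • v) := by rw [smul_smul]; congr 1; field_simp
    rw [e1, e2, hom h0 hdist hsu hsv hp0 hp1, smul_smul]
    congr 1; field_simp

/-- `o` extended to the cone by homogeneity. -/
noncomputable def obar (X : Set V) (o : V → V → V) (u v : V) : V :=
  if h : u ∈ CC X ∧ v ∈ CC X then
    ((h.1.choose + h.2.choose)) • o (((h.1.choose + h.2.choose))⁻¹ • u)
      (((h.1.choose + h.2.choose))⁻¹ • v)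
  else 0

include hX h0 hdist in
lemma obar_spec {u v : V} (hu : u ∈ CC X) (hv : v ∈ CC X) {s : ℝ} (hs : 0 < s)
    (hsu : s⁻¹ • u ∈ X) (hsv : s⁻¹ • v ∈ X) :
    obar X o u v = s • o (s⁻¹ • u) (s⁻¹ • v) := by
  rw [obar, dif_pos ⟨hu, hv⟩]
  set h : u ∈ CC X ∧ v ∈ CC X := ⟨hu, hv⟩ with hh
  have e1 := h.1.choose_spec
  have e2 := h.2.choose_spec
  generalize hg1 : h.1.choose = c1 at e1 ⊢
  generalize hg2 : h.2.choose = c2 at e2 ⊢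
  obtain ⟨hc1, x1, hx1, he1⟩ := e1
  obtain ⟨hc2, x2, hx2, he2⟩ := e2
  set s0 : ℝ := c1 + c2 with hs0def
  have hs0 : 0 < s0 := by positivity
  have hu1 : c1⁻¹ • u ∈ X := by
    rw [he1, smul_smul, inv_mul_cancel₀ hc1.ne', one_smul]; exact hx1
  have hv1 : c2⁻¹ • v ∈ X := by
    rw [he2, smul_smul, inv_mul_cancel₀ hc2.ne', one_smul]; exact hx2
  have hs0u : s0⁻¹ • u ∈ X := grow hX h0 hc1 (by rw [hs0def]; linarith) hu1
  have hs0v : s0⁻¹ • v ∈ X := grow hX h0 hc2 (by rw [hs0def]; linarith) hv1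
  have k1 := key h0 hdist hs (le_max_left s s0) hsu hsv
  have k2 := key h0 hdist hs0 (le_max_right s s0) hs0u hs0v
  rw [← k1, ← k2]

include hX h0 in
lemma common_scale {u v w : V} (hu : u ∈ CC X) (hv : v ∈ CC X) (hw : w ∈ CC X) :
    ∃ s : ℝ, 0 < s ∧ s⁻¹ • u ∈ X ∧ s⁻¹ • v ∈ X ∧ s⁻¹ • w ∈ X := by
  obtain ⟨c1, hc1, H1⟩ := CC_exists_scale hX h0 hu
  obtain ⟨c2, hc2, H2⟩ := CC_exists_scale hX h0 hv
  obtain ⟨c3, hc3, H3⟩ := CC_exists_scale hX h0 hw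
  refine ⟨max (max c1 c2) c3, by positivity, H1 _ ?_, H2 _ ?_, H3 _ ?_⟩
  · exact le_max_of_le_left (le_max_left _ _)
  · exact le_max_of_le_left (le_max_right _ _)
  · exact le_max_right _ _

variable (hoX : ∀ x ∈ X, ∀ y ∈ X, o x y ∈ X)
variable (hidem : ∀ x ∈ X, o x x = x)
variable (hcomm : ∀ x ∈ X, ∀ y ∈ X, o x y = o y x)
variable (hassoc : ∀ x ∈ X, ∀ y ∈ X, ∀ z ∈ X, o x (o y z) = o (o x y) z)

include hX h0 hdist hoX in
lemma obar_mem {u v : V} (hu : u ∈ CC X) (hv : v ∈ CC X) : obar X o u v ∈ CC X := by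
  obtain ⟨s, hs, hsu, hsv, -⟩ := common_scale hX h0 hu hv (zero_mem_CC h0)
  rw [obar_spec hX h0 hdist hu hv hs hsu hsv]
  exact ⟨s, hs, _, hoX _ hsu _ hsv, rfl⟩

include hX h0 hdist hidem in
lemma obar_idem {u : V} (hu : u ∈ CC X) : obar X o u u = u := by
  obtain ⟨s, hs, hsu, -, -⟩ := common_scale hX h0 hu hu hu
  rw [obar_spec hX h0 hdist hu hu hs hsu hsu, hidem _ hsu, smul_inv_smul₀ hs.ne']

include hX h0 hdist hcomm in
lemma obar_comm {u v : V} (hu : u ∈ CC X) (hv : v ∈ CC X) :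
    obar X o u v = obar X o v u := by
  obtain ⟨s, hs, hsu, hsv, -⟩ := common_scale hX h0 hu hv (zero_mem_CC h0)
  rw [obar_spec hX h0 hdist hu hv hs hsu hsv, obar_spec hX h0 hdist hv hu hs hsv hsu,
    hcomm _ hsu _ hsv]

include hX h0 hdist hoX hassoc in
lemma obar_assoc {u v w : V} (hu : u ∈ CC X) (hv : v ∈ CC X) (hw : w ∈ CC X) :
    obar X o u (obar X o v w) = obar X o (obar X o u v) w := by
  obtain ⟨s, hs, hsu, hsv, hsw⟩ := common_scale hX h0 hu hv hw
  have hvw : obar X o v w = s • o (s⁻¹ • v) (s⁻¹ • w) := obar_spec hX h0 hdist hv hw hs hsv hsw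
  have huv : obar X o u v = s • o (s⁻¹ • u) (s⁻¹ • v) := obar_spec hX h0 hdist hu hv hs hsu hsv
  have hvwX : s⁻¹ • obar X o v w ∈ X := by
    rw [hvw, inv_smul_smul₀ hs.ne']; exact hoX _ hsv _ hsw
  have huvX : s⁻¹ • obar X o u v ∈ X := by
    rw [huv, inv_smul_smul₀ hs.ne']; exact hoX _ hsu _ hsv
  rw [obar_spec hX h0 hdist hu (obar_mem hX h0 hdist hoX hv hw) hs hsu hvwX,
    obar_spec hX h0 hdist (obar_mem hX h0 hdist hoX hu hv) hw hs huvX hsw,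
    hvw, huv, inv_smul_smul₀ hs.ne', inv_smul_smul₀ hs.ne',
    hassoc _ hsu _ hsv _ hsw]

include hX h0 hdist in
lemma obar_dist {u v w : V} (hu : u ∈ CC X) (hv : v ∈ CC X) (hw : w ∈ CC X)
    {p : ℝ} (hp : p ∈ Set.Ioo (0 : ℝ) 1) :
    p • obar X o u v + (1 - p) • w
      = obar X o (p • u + (1 - p) • w) (p • v + (1 - p) • w) := by
  obtain ⟨s, hs, hsu, hsv, hsw⟩ := common_scale hX h0 hu hv hw
  have hu' : p • u + (1 - p) • w ∈ CC X :=
    CC_add hX (CC_smul hp.1 hu) (CC_smul (by linarith [hp.2]) hw)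
  have hv' : p • v + (1 - p) • w ∈ CC X :=
    CC_add hX (CC_smul hp.1 hv) (CC_smul (by linarith [hp.2]) hw)
  have e1 : s⁻¹ • (p • u + (1 - p) • w) = p • (s⁻¹ • u) + (1 - p) • (s⁻¹ • w) := by
    module
  have e2 : s⁻¹ • (p • v + (1 - p) • w) = p • (s⁻¹ • v) + (1 - p) • (s⁻¹ • w) := by
    module
  have hx1 : s⁻¹ • (p • u + (1 - p) • w) ∈ X := by
    rw [e1]; exact hX _ hsu _ hsw p hp
  have hx2 : s⁻¹ • (p • v + (1 - p) • w) ∈ X := by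
    rw [e2]; exact hX _ hsv _ hsw p hp
  rw [obar_spec hX h0 hdist hu hv hs hsu hsv,
    obar_spec hX h0 hdist hu' hv' hs hx1 hx2, e1, e2,
    ← hdist _ hsu _ hsv _ hsw p hp]
  have hs' : s ≠ 0 := hs.ne'
  match_scalars <;> (field_simp; try ring)

include hX h0 hdist in
lemma obar_hom {u v : V} (hu : u ∈ CC X) (hv : v ∈ CC X) {c : ℝ} (hc : 0 < c) :
    obar X o (c • u) (c • v) = c • obar X o u v := by
  obtain ⟨s, hs, hsu, hsv, -⟩ := common_scale hX h0 hu hv (zero_mem_CC h0)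
  have hc' : c ≠ 0 := hc.ne'
  have hs' : s ≠ 0 := hs.ne'
  have e1 : (c * s)⁻¹ • (c • u) = s⁻¹ • u := by
    rw [smul_smul]; congr 1; field_simp
  have e2 : (c * s)⁻¹ • (c • v) = s⁻¹ • v := by
    rw [smul_smul]; congr 1; field_simp
  rw [obar_spec hX h0 hdist (CC_smul hc hu) (CC_smul hc hv) (by positivity : (0:ℝ) < c * s)
      (e1 ▸ hsu) (e2 ▸ hsv), e1, e2,
    obar_spec hX h0 hdist hu hv hs hsu hsv, smul_smul]

include hX h0 hdist in
lemma obar_translate {u v z : V} (hu : u ∈ CC X) (hv : v ∈ CC X) (hz : z ∈ CC X) :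
    obar X o (u + z) (v + z) = obar X o u v + z := by
  have h2 : ((2:ℝ))⁻¹ ∈ Set.Ioo (0:ℝ) 1 := by norm_num
  have hd := obar_dist hX h0 hdist hu hv hz h2
  have e1 : (2:ℝ)⁻¹ • u + (1 - (2:ℝ)⁻¹) • z = (2:ℝ)⁻¹ • (u + z) := by module
  have e2 : (2:ℝ)⁻¹ • v + (1 - (2:ℝ)⁻¹) • z = (2:ℝ)⁻¹ • (v + z) := by module
  rw [e1, e2, obar_hom hX h0 hdist (CC_add hX hu hz) (CC_add hX hv hz)
    (by norm_num : (0:ℝ) < 2⁻¹)] at hd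
  have := congrArg (fun x => (2:ℝ) • x) hd
  simpa [smul_smul, smul_add, show (2:ℝ)*(1-2⁻¹)=1 by norm_num] using this.symm
def Wsub (hX : ∀ x ∈ X, ∀ y ∈ X, ∀ p ∈ Set.Ioo (0 : ℝ) 1, p • x + (1 - p) • y ∈ X)
    (h0 : (0 : V) ∈ X) : Submodule ℝ V where
  carrier := {w | ∃ z ∈ CC X, w + z ∈ CC X}
  zero_mem' := ⟨0, zero_mem_CC h0, by simpa using zero_mem_CC h0⟩
  add_mem' := by
    rintro a b ⟨z1, hz1, h1⟩ ⟨z2, hz2, h2⟩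
    refine ⟨z1 + z2, CC_add hX hz1 hz2, ?_⟩
    have e : a + b + (z1 + z2) = (a + z1) + (b + z2) := by abel
    rw [e]; exact CC_add hX h1 h2
  smul_mem' := by
    rintro c w ⟨z, hz, h1⟩
    rcases lt_trichotomy c 0 with hc | hc | hc
    · refine ⟨(-c) • (w + z), CC_smul (by linarith) h1, ?_⟩
      have e : c • w + (-c) • (w + z) = (-c) • z := by module
      rw [e]; exact CC_smul (by linarith) hz
    · refine ⟨0, zero_mem_CC h0, ?_⟩
      simpa [hc] using zero_mem_CC h0
    · exact ⟨c • z, CC_smul hc hz, by rw [← smul_add]; exact CC_smul hc h1⟩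

/-- the extension of `o` to the subspace -/
noncomputable def bb (X : Set V) (o : V → V → V) (w1 w2 : V) : V :=
  if h : ∃ z ∈ CC X, w1 + z ∈ CC X ∧ w2 + z ∈ CC X then
    obar X o (w1 + h.choose) (w2 + h.choose) - h.choose
  else 0

include hX h0 hdist in
lemma bb_spec {w1 w2 z : V} (hz : z ∈ CC X) (h1 : w1 + z ∈ CC X) (h2 : w2 + z ∈ CC X) :
    bb X o w1 w2 = obar X o (w1 + z) (w2 + z) - z := by
  rw [bb, dif_pos ⟨z, hz, h1, h2⟩]
  set h : ∃ z ∈ CC X, w1 + z ∈ CC X ∧ w2 + z ∈ CC X := ⟨z, hz, h1, h2⟩ with hh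
  have e := h.choose_spec
  generalize hg : h.choose = z0 at e ⊢
  obtain ⟨hz0, h10, h20⟩ := e
  have t1 := obar_translate hX h0 hdist h10 h20 hz
  have t2 := obar_translate hX h0 hdist h1 h2 hz0
  have e2 : w1 + z0 + z = w1 + z + z0 := by abel
  have e3 : w2 + z0 + z = w2 + z + z0 := by abel
  rw [e2, e3, t2] at t1
  rw [sub_eq_sub_iff_add_eq_add]
  exact t1.symm

end

end CSLExt

open CSLExt in

/-- A convex semilattice structure on a convex subset `X` of a real vector space
with `0 ∈ X` extends to a convex semilattice structure on a linear subspace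
containing `X`. -/
theorem convex_semilattice_extends_to_subspace
    (V : Type*) [AddCommGroup V] [Module ℝ V] (X : Set V)
    (hX : ∀ x ∈ X, ∀ y ∈ X, ∀ p ∈ Set.Ioo (0 : ℝ) 1, p • x + (1 - p) • y ∈ X)
    (h0 : (0 : V) ∈ X)
    (o : V → V → V)
    (hoX : ∀ x ∈ X, ∀ y ∈ X, o x y ∈ X)
    (hidem : ∀ x ∈ X, o x x = x)
    (hcomm : ∀ x ∈ X, ∀ y ∈ X, o x y = o y x)
    (hassoc : ∀ x ∈ X, ∀ y ∈ X, ∀ z ∈ X, o x (o y z) = o (o x y) z)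
    (hdist : ∀ x ∈ X, ∀ y ∈ X, ∀ z ∈ X, ∀ p ∈ Set.Ioo (0 : ℝ) 1,
      p • o x y + (1 - p) • z = o (p • x + (1 - p) • z) (p • y + (1 - p) • z)) :
    ∃ (W : Submodule ℝ V) (b : V → V → V),
      X ⊆ (W : Set V) ∧
      (∀ x ∈ W, ∀ y ∈ W, b x y ∈ W) ∧
      (∀ x ∈ W, b x x = x) ∧
      (∀ x ∈ W, ∀ y ∈ W, b x y = b y x) ∧
      (∀ x ∈ W, ∀ y ∈ W, ∀ z ∈ W, b x (b y z) = b (b x y) z) ∧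
      (∀ x ∈ W, ∀ y ∈ W, ∀ z ∈ W, ∀ p ∈ Set.Ioo (0 : ℝ) 1,
        p • b x y + (1 - p) • z = b (p • x + (1 - p) • z) (p • y + (1 - p) • z)) ∧
      (∀ x ∈ X, ∀ y ∈ X, b x y = o x y) := by
  classical
  refine ⟨Wsub hX h0, bb X o, ?_, ?_, ?_, ?_, ?_, ?_, ?_⟩
  · intro x hx
    exact ⟨0, zero_mem_CC h0, by simpa using X_subset_CC hx⟩
  · rintro w1 ⟨z1, hz1, h1⟩ w2 ⟨z2, hz2, h2⟩
    obtain ⟨z, hz, hw1, hw2⟩ : ∃ z ∈ CC X, w1 + z ∈ CC X ∧ w2 + z ∈ CC X := by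
      refine ⟨z1 + z2, CC_add hX hz1 hz2, ?_, ?_⟩
      · have e : w1 + (z1 + z2) = (w1 + z1) + z2 := by abel
        rw [e]; exact CC_add hX h1 hz2
      · have e : w2 + (z1 + z2) = (w2 + z2) + z1 := by abel
        rw [e]; exact CC_add hX h2 hz1
    rw [bb_spec hX h0 hdist hz hw1 hw2]
    refine ⟨z, hz, ?_⟩
    rw [sub_add_cancel]
    exact obar_mem hX h0 hdist hoX hw1 hw2
  · rintro w ⟨z, hz, h1⟩
    rw [bb_spec hX h0 hdist hz h1 h1, obar_idem hX h0 hdist hidem h1, add_sub_cancel_right]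
  · rintro w1 ⟨z1, hz1, h1⟩ w2 ⟨z2, hz2, h2⟩
    obtain ⟨z, hz, hw1, hw2⟩ : ∃ z ∈ CC X, w1 + z ∈ CC X ∧ w2 + z ∈ CC X := by
      refine ⟨z1 + z2, CC_add hX hz1 hz2, ?_, ?_⟩
      · have e : w1 + (z1 + z2) = (w1 + z1) + z2 := by abel
        rw [e]; exact CC_add hX h1 hz2
      · have e : w2 + (z1 + z2) = (w2 + z2) + z1 := by abel
        rw [e]; exact CC_add hX h2 hz1
    rw [bb_spec hX h0 hdist hz hw1 hw2, bb_spec hX h0 hdist hz hw2 hw1,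
      obar_comm hX h0 hdist hcomm hw1 hw2]
  · rintro w1 ⟨z1, hz1, g1⟩ w2 ⟨z2, hz2, g2⟩ w3 ⟨z3, hz3, g3⟩
    obtain ⟨z, hz, hw1, hw2, hw3⟩ :
        ∃ z ∈ CC X, w1 + z ∈ CC X ∧ w2 + z ∈ CC X ∧ w3 + z ∈ CC X := by
      refine ⟨z1 + z2 + z3, CC_add hX (CC_add hX hz1 hz2) hz3, ?_, ?_, ?_⟩
      · have e : w1 + (z1 + z2 + z3) = (w1 + z1) + (z2 + z3) := by abel
        rw [e]; exact CC_add hX g1 (CC_add hX hz2 hz3)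
      · have e : w2 + (z1 + z2 + z3) = (w2 + z2) + (z1 + z3) := by abel
        rw [e]; exact CC_add hX g2 (CC_add hX hz1 hz3)
      · have e : w3 + (z1 + z2 + z3) = (w3 + z3) + (z1 + z2) := by abel
        rw [e]; exact CC_add hX g3 (CC_add hX hz1 hz2)
    have hzz : z + z ∈ CC X := CC_add hX hz hz
    have hu1 : w1 + (z + z) ∈ CC X := by
      have e : w1 + (z + z) = (w1 + z) + z := by abel
      rw [e]; exact CC_add hX hw1 hz
    have hu2 : w2 + (z + z) ∈ CC X := by
      have e : w2 + (z + z) = (w2 + z) + z := by abel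
      rw [e]; exact CC_add hX hw2 hz
    have hu3 : w3 + (z + z) ∈ CC X := by
      have e : w3 + (z + z) = (w3 + z) + z := by abel
      rw [e]; exact CC_add hX hw3 hz
    have h23 : bb X o w2 w3 = obar X o (w2 + (z + z)) (w3 + (z + z)) - (z + z) :=
      bb_spec hX h0 hdist hzz hu2 hu3
    have h12 : bb X o w1 w2 = obar X o (w1 + (z + z)) (w2 + (z + z)) - (z + z) :=
      bb_spec hX h0 hdist hzz hu1 hu2
    have h23' : bb X o w2 w3 + (z + z) = obar X o (w2 + (z + z)) (w3 + (z + z)) := by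
      rw [h23, sub_add_cancel]
    have h12' : bb X o w1 w2 + (z + z) = obar X o (w1 + (z + z)) (w2 + (z + z)) := by
      rw [h12, sub_add_cancel]
    have m23 : obar X o (w2 + (z + z)) (w3 + (z + z)) ∈ CC X :=
      obar_mem hX h0 hdist hoX hu2 hu3
    have m12 : obar X o (w1 + (z + z)) (w2 + (z + z)) ∈ CC X :=
      obar_mem hX h0 hdist hoX hu1 hu2
    have mb23 : bb X o w2 w3 + (z + z) ∈ CC X := by rw [h23']; exact m23
    have mb12 : bb X o w1 w2 + (z + z) ∈ CC X := by rw [h12']; exact m12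
    rw [bb_spec hX h0 hdist hzz hu1 mb23,
      bb_spec hX h0 hdist hzz mb12 hu3, h23', h12',
      obar_assoc hX h0 hdist hoX hassoc hu1 hu2 hu3]
  · rintro w1 ⟨z1, hz1, g1⟩ w2 ⟨z2, hz2, g2⟩ w3 ⟨z3, hz3, g3⟩ p hp
    obtain ⟨z, hz, hw1, hw2, hw3⟩ :
        ∃ z ∈ CC X, w1 + z ∈ CC X ∧ w2 + z ∈ CC X ∧ w3 + z ∈ CC X := by
      refine ⟨z1 + z2 + z3, CC_add hX (CC_add hX hz1 hz2) hz3, ?_, ?_, ?_⟩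
      · have e : w1 + (z1 + z2 + z3) = (w1 + z1) + (z2 + z3) := by abel
        rw [e]; exact CC_add hX g1 (CC_add hX hz2 hz3)
      · have e : w2 + (z1 + z2 + z3) = (w2 + z2) + (z1 + z3) := by abel
        rw [e]; exact CC_add hX g2 (CC_add hX hz1 hz3)
      · have e : w3 + (z1 + z2 + z3) = (w3 + z3) + (z1 + z2) := by abel
        rw [e]; exact CC_add hX g3 (CC_add hX hz1 hz2)
    have hp1 : (0:ℝ) < 1 - p := by linarith [hp.2]
    have e1 : p • w1 + (1 - p) • w3 + z = p • (w1 + z) + (1 - p) • (w3 + z) := by module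
    have e2 : p • w2 + (1 - p) • w3 + z = p • (w2 + z) + (1 - p) • (w3 + z) := by module
    have c1 : p • w1 + (1 - p) • w3 + z ∈ CC X := by
      rw [e1]; exact CC_add hX (CC_smul hp.1 hw1) (CC_smul hp1 hw3)
    have c2 : p • w2 + (1 - p) • w3 + z ∈ CC X := by
      rw [e2]; exact CC_add hX (CC_smul hp.1 hw2) (CC_smul hp1 hw3)
    rw [bb_spec hX h0 hdist hz hw1 hw2, bb_spec hX h0 hdist hz c1 c2, e1, e2,
      ← obar_dist hX h0 hdist hw1 hw2 hw3 hp]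
    module
  · intro x hx y hy
    have hz0 : (0:V) ∈ CC X := zero_mem_CC h0
    have hx0 : x + 0 ∈ CC X := by simpa using X_subset_CC hx
    have hy0 : y + 0 ∈ CC X := by simpa using X_subset_CC hy
    rw [bb_spec hX h0 hdist hz0 hx0 hy0, sub_zero, add_zero, add_zero]
    have h1 : (1:ℝ)⁻¹ • x ∈ X := by simpa using hx
    have h2 : (1:ℝ)⁻¹ • y ∈ X := by simpa using hy
    rw [obar_spec hX h0 hdist (X_subset_CC hx) (X_subset_CC hy) one_pos h1 h2]
    simp
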